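/- Let d ≥ 1 and let a_1, …, a_d, x be positive real numbers. Then, as m_1, …, m_d → ∞ (along the product filter atTop in all d variables), the d-fold Riemann sum (1/(2 m_1 ⋯ m_d)) · Σ_{i_1=1}^{m_1} ⋯ Σ_{i_d=1}^{m_d} ln( x^2 + Σ_{s=1}^{d} 4 a_s^2 cos^2( i_s π/(2 m_s + 1) ) ) converges to (2^{d-1}/π^d) · ∫_{[0,π/2]^d} ln( x^2 + Σ_{s=1}^{d} 4 a_s^2 cos^2 θ_s ) dθ_1 ⋯ dθ_d. (This limit is the free energy Φ_d(a_1,…,a_d,x) of the monopole-dimer model on d-dimensional grids with all even side lengths, since ln Z_{2m_1,…,2m_d} equals 2^{d-1} times the above sum.) -/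

import Mathlib

open MeasureTheory Filter Set Topology

/-- The Riemann node of the cell containing `t`, for the subdivision of `[0, π/2]`
into `n` cells of width `π/(2n)`, with node `i π/(2n+1)` in the `i`-th cell. -/
noncomputable def mdNode (n : ℕ) (t : ℝ) : ℝ :=
  (⌈2 * (n : ℝ) * t / Real.pi⌉ : ℝ) * (Real.pi / (2 * (n : ℝ) + 1))

lemma mdNode_tendsto (t : ℝ) : Tendsto (fun n : ℕ => mdNode n t) atTop (𝓝 t) := by
  have hpi := Real.pi_pos
  have h0 : Tendsto (fun n : ℕ => (Real.pi + |t|) / (2 * (n : ℝ) + 1)) atTop (𝓝 0) := by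
    apply Tendsto.div_atTop tendsto_const_nhds
    exact tendsto_atTop_add_const_right _ 1
      (tendsto_natCast_atTop_atTop.const_mul_atTop two_pos)
  have key : ∀ n : ℕ, ‖mdNode n t - t‖ ≤ (Real.pi + |t|) / (2 * (n : ℝ) + 1) := by
    intro n
    have hden : (0 : ℝ) < 2 * (n : ℝ) + 1 := by positivity
    set r : ℝ := 2 * (n : ℝ) * t / Real.pi with hr
    have hle : r ≤ (⌈r⌉ : ℝ) := Int.le_ceil r
    have hlt : (⌈r⌉ : ℝ) < r + 1 := Int.ceil_lt_add_one r
    have heq : r * Real.pi = 2 * (n : ℝ) * t := by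
      rw [hr, div_mul_cancel₀ _ hpi.ne']
    have h1 : 2 * (n : ℝ) * t ≤ (⌈r⌉ : ℝ) * Real.pi := by
      nlinarith [mul_le_mul_of_nonneg_right hle hpi.le]
    have h2 : (⌈r⌉ : ℝ) * Real.pi < 2 * (n : ℝ) * t + Real.pi := by
      nlinarith [mul_lt_mul_of_pos_right hlt hpi]
    have hmd : mdNode n t - t = ((⌈r⌉ : ℝ) * Real.pi - (2 * (n : ℝ) + 1) * t) / (2 * (n : ℝ) + 1) := by
      rw [mdNode]
      field_simp
      rfl
    have hnum : |(⌈r⌉ : ℝ) * Real.pi - (2 * (n : ℝ) + 1) * t| ≤ Real.pi + |t| := by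
      rw [abs_le]
      constructor
      · nlinarith [neg_abs_le t, le_abs_self t]
      · nlinarith [neg_abs_le t, le_abs_self t]
    rw [hmd, Real.norm_eq_abs, abs_div, abs_of_pos hden]
    exact (div_le_div_iff_of_pos_right hden).2 hnum
  have hz : Tendsto (fun n : ℕ => mdNode n t - t) atTop (𝓝 0) :=
    squeeze_zero_norm key h0
  simpa using hz.add_const t

lemma mdNode_eq_on_cell {n i : ℕ} {t : ℝ}
    (ht : t ∈ Set.Ioc (((i : ℝ) - 1) * (Real.pi / (2 * (n : ℝ))))
      ((i : ℝ) * (Real.pi / (2 * (n : ℝ))))) (hn : 1 ≤ n) :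
    mdNode n t = (i : ℝ) * Real.pi / (2 * (n : ℝ) + 1) := by
  have hpi := Real.pi_pos
  have hn' : (0 : ℝ) < (n : ℝ) := by exact_mod_cast hn
  have hceil : ⌈2 * (n : ℝ) * t / Real.pi⌉ = (i : ℤ) := by
    rw [Int.ceil_eq_iff]
    have e1 : ((i : ℝ) - 1) * Real.pi = ((i : ℝ) - 1) * (Real.pi / (2 * (n : ℝ))) * (2 * (n : ℝ)) := by
      field_simp
    have e2 : (i : ℝ) * Real.pi = (i : ℝ) * (Real.pi / (2 * (n : ℝ))) * (2 * (n : ℝ)) := by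
      field_simp
    constructor
    · rw [lt_div_iff₀ hpi]
      push_cast
      nlinarith [mul_lt_mul_of_pos_right ht.1 (show (0:ℝ) < 2 * (n : ℝ) by positivity)]
    · rw [div_le_iff₀ hpi]
      push_cast
      nlinarith [mul_le_mul_of_nonneg_right ht.2 (show (0:ℝ) ≤ 2 * (n : ℝ) by positivity)]
  rw [mdNode, hceil]
  push_cast
  ring

lemma Ioc_eq_biUnion (n : ℕ) {h : ℝ} (hh : 0 < h) :
    Set.Ioc (0 : ℝ) ((n : ℝ) * h) =
      ⋃ i ∈ Finset.Icc 1 n, Set.Ioc (((i : ℝ) - 1) * h) ((i : ℝ) * h) := by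
  induction n with
  | zero => simp
  | succ n ih =>
    rw [← Finset.insert_Icc_right_eq_Icc_add_one (by omega), Finset.set_biUnion_insert, ← ih]
    have h1 : ((n + 1 : ℕ) : ℝ) - 1 = (n : ℝ) := by push_cast; ring
    rw [h1, Set.union_comm, Set.Ioc_union_Ioc_eq_Ioc (by positivity)
      (by push_cast; nlinarith)]

lemma univ_pi_biUnion {d : ℕ} (m : Fin d → ℕ) (C : (s : Fin d) → ℕ → Set ℝ) :
    (Set.univ.pi fun s => ⋃ i ∈ Finset.Icc 1 (m s), C s i) =
      ⋃ f ∈ Fintype.piFinset (fun s => Finset.Icc 1 (m s)),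
        Set.univ.pi (fun s => C s (f s)) := by
  ext θ
  simp only [Set.mem_pi, Set.mem_univ, Set.mem_iUnion, forall_true_left,
    Fintype.mem_piFinset, true_implies, exists_prop]
  constructor
  · intro hθ
    choose f hf1 hf2 using hθ
    exact ⟨f, hf1, fun s => hf2 s⟩
  · rintro ⟨f, hf1, hf2⟩ s
    exact ⟨f s, hf1 s, hf2 s⟩


lemma integral_step {d : ℕ} (a : Fin d → ℝ) (x : ℝ) (m : Fin d → ℕ) (hm : ∀ s, 1 ≤ m s) :
    ∫ θ : Fin d → ℝ in Set.univ.pi (fun _ => Set.Icc 0 (Real.pi / 2)),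
        Real.log (x ^ 2 + ∑ s : Fin d, 4 * a s ^ 2 * Real.cos (mdNode (m s) (θ s)) ^ 2)
      = (∏ s : Fin d, Real.pi / (2 * (m s : ℝ))) *
        ∑ f ∈ Fintype.piFinset (fun s : Fin d => Finset.Icc 1 (m s)),
          Real.log (x ^ 2 + ∑ s : Fin d,
            4 * a s ^ 2 * Real.cos ((f s : ℝ) * Real.pi / (2 * (m s : ℝ) + 1)) ^ 2) := by
  have hpi := Real.pi_pos
  set h : Fin d → ℝ := fun s => Real.pi / (2 * (m s : ℝ)) with hh
  have hmpos : ∀ s, (0 : ℝ) < (m s : ℝ) := fun s => by exact_mod_cast hm s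
  have hhpos : ∀ s, 0 < h s := fun s => by
    have := hmpos s; rw [hh]; positivity
  have hend : ∀ s, (m s : ℝ) * h s = Real.pi / 2 := fun s => by
    have hne := (hmpos s).ne'
    rw [hh]; field_simp
  -- replace Icc by Ioc
  have e1 : (Set.univ.pi fun s : Fin d => Set.Ioc (0 : ℝ) ((m s : ℝ) * h s))
      =ᵐ[(volume : Measure (Fin d → ℝ))]
      (Set.univ.pi fun _ : Fin d => Set.Icc (0 : ℝ) (Real.pi / 2)) := by
    have heq : (Set.univ.pi fun s : Fin d => Set.Icc (0 : ℝ) ((m s : ℝ) * h s))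
        = Set.univ.pi fun _ : Fin d => Set.Icc (0 : ℝ) (Real.pi / 2) := by
      rw [show (fun s : Fin d => Set.Icc (0 : ℝ) ((m s : ℝ) * h s))
        = fun _ : Fin d => Set.Icc (0 : ℝ) (Real.pi / 2) from funext fun s => by rw [hend s]]
    rw [← heq, volume_pi]
    exact MeasureTheory.Measure.pi_Ioc_ae_eq_pi_Icc
  rw [← setIntegral_congr_set e1]
  -- decompose into cells
  have e2 : (Set.univ.pi fun s : Fin d => Set.Ioc (0 : ℝ) ((m s : ℝ) * h s)) =
      ⋃ f ∈ Fintype.piFinset (fun s : Fin d => Finset.Icc 1 (m s)),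
        Set.univ.pi (fun s => Set.Ioc (((f s : ℝ) - 1) * h s) ((f s : ℝ) * h s)) := by
    have : (fun s : Fin d => Set.Ioc (0 : ℝ) ((m s : ℝ) * h s))
        = fun s => ⋃ i ∈ Finset.Icc 1 (m s), Set.Ioc (((i : ℝ) - 1) * h s) ((i : ℝ) * h s) :=
      funext fun s => Ioc_eq_biUnion (m s) (hhpos s)
    rw [this]
    exact univ_pi_biUnion m _
  have hcellmeas : ∀ f : Fin d → ℕ,
      MeasurableSet (Set.univ.pi fun s => Set.Ioc (((f s : ℝ) - 1) * h s) ((f s : ℝ) * h s)) :=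
    fun f => MeasurableSet.univ_pi fun s => measurableSet_Ioc
  have hcellvol : ∀ f : Fin d → ℕ,
      volume (Set.univ.pi fun s => Set.Ioc (((f s : ℝ) - 1) * h s) ((f s : ℝ) * h s))
        = ENNReal.ofReal (∏ s : Fin d, h s) := by
    intro f
    rw [volume_pi_pi]
    have : ∀ s : Fin d, (f s : ℝ) * h s - ((f s : ℝ) - 1) * h s = h s := fun s => by ring
    simp only [Real.volume_Ioc, this]
    rw [← ENNReal.ofReal_prod_of_nonneg]
    intro s _
    exact (hhpos s).le
  have hconst : ∀ f ∈ Fintype.piFinset (fun s : Fin d => Finset.Icc 1 (m s)),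
      ∀ θ ∈ Set.univ.pi fun s => Set.Ioc (((f s : ℝ) - 1) * h s) ((f s : ℝ) * h s),
      Real.log (x ^ 2 + ∑ s : Fin d, 4 * a s ^ 2 * Real.cos (mdNode (m s) (θ s)) ^ 2)
        = Real.log (x ^ 2 + ∑ s : Fin d,
            4 * a s ^ 2 * Real.cos ((f s : ℝ) * Real.pi / (2 * (m s : ℝ) + 1)) ^ 2) := by
    intro f hf θ hθ
    congr 1
    congr 1
    apply Finset.sum_congr rfl
    intro s _
    have := hθ s (Set.mem_univ s)
    rw [mdNode_eq_on_cell this (hm s)]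
  rw [e2, integral_biUnion_finset _ (fun f _ => hcellmeas f) ?_ ?_]
  · rw [Finset.mul_sum]
    apply Finset.sum_congr rfl
    intro f hf
    rw [setIntegral_congr_fun (hcellmeas f) (hconst f hf), setIntegral_const, Measure.real, hcellvol f,
      ENNReal.toReal_ofReal (Finset.prod_nonneg fun s _ => (hhpos s).le), smul_eq_mul]
  · -- pairwise disjoint
    intro f hf g hg hfg
    rw [Function.onFun, Set.disjoint_left]
    intro θ hθf hθg
    obtain ⟨s, hs⟩ := Function.ne_iff.1 hfg
    have h1 := hθf s (Set.mem_univ s)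
    have h2 := hθg s (Set.mem_univ s)
    have hhs := hhpos s
    rcases lt_or_gt_of_ne hs with hlt | hlt
    · have : (f s : ℝ) ≤ (g s : ℝ) - 1 := by
        have : (f s : ℕ) + 1 ≤ g s := hlt
        have := (Nat.cast_le (α := ℝ)).2 this
        push_cast at this
        linarith
      nlinarith [h1.2, h2.1]
    · have : (g s : ℝ) ≤ (f s : ℝ) - 1 := by
        have : (g s : ℕ) + 1 ≤ f s := hlt
        have := (Nat.cast_le (α := ℝ)).2 this
        push_cast at this
        linarith
      nlinarith [h1.1, h2.2]
  · -- integrable on each cell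
    intro f hf
    have hcellfin : volume (Set.univ.pi fun s => Set.Ioc (((f s : ℝ) - 1) * h s) ((f s : ℝ) * h s)) < ⊤ := by
      rw [hcellvol f]; exact ENNReal.ofReal_lt_top
    exact (integrableOn_const hcellfin.ne).congr_fun
      (fun θ hθ => (hconst f hf θ hθ).symm) (hcellmeas f)

theorem freeEnergyGrid (d : ℕ) (hd : 1 ≤ d) (a : Fin d → ℝ) (x : ℝ)
    (ha : ∀ s, 0 < a s) (hx : 0 < x) :
    Filter.Tendsto
      (fun m : Fin d → ℕ =>
        (1 / (2 * ∏ s : Fin d, (m s : ℝ))) *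
          ∑ f ∈ Fintype.piFinset (fun s : Fin d => Finset.Icc 1 (m s)),
            Real.log (x ^ 2 + ∑ s : Fin d,
              4 * a s ^ 2 * Real.cos ((f s : ℝ) * Real.pi / (2 * (m s : ℝ) + 1)) ^ 2))
      Filter.atTop
      (nhds ((2 ^ (d - 1) / Real.pi ^ d) *
        ∫ θ : Fin d → ℝ in Set.univ.pi (fun _ => Set.Icc 0 (Real.pi / 2)),
          Real.log (x ^ 2 + ∑ s : Fin d, 4 * a s ^ 2 * Real.cos (θ s) ^ 2))) := by
  have hpi := Real.pi_pos
  set S : Set (Fin d → ℝ) := Set.univ.pi (fun _ => Set.Icc 0 (Real.pi / 2)) with hS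
  set G : (Fin d → ℝ) → ℝ :=
    fun θ => Real.log (x ^ 2 + ∑ s : Fin d, 4 * a s ^ 2 * Real.cos (θ s) ^ 2) with hG
  have hargpos : ∀ θ : Fin d → ℝ, 0 < x ^ 2 + ∑ s : Fin d, 4 * a s ^ 2 * Real.cos (θ s) ^ 2 := by
    intro θ
    have : (0:ℝ) ≤ ∑ s : Fin d, 4 * a s ^ 2 * Real.cos (θ s) ^ 2 :=
      Finset.sum_nonneg fun s _ => by positivity
    positivity
  have hGcont : Continuous G := by
    apply Continuous.log
    · apply Continuous.add continuous_const
      apply continuous_finset_sum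
      intro s _
      exact (continuous_const.mul (((Real.continuous_cos.comp (continuous_apply s)).pow 2)))
    · exact fun θ => (hargpos θ).ne'
  -- uniform bound
  set C : ℝ := |Real.log (x ^ 2)| + |Real.log (x ^ 2 + ∑ s : Fin d, 4 * a s ^ 2)| with hC
  have hbG : ∀ θ : Fin d → ℝ, |G θ| ≤ C := by
    intro θ
    have hsum : (0:ℝ) ≤ ∑ s : Fin d, 4 * a s ^ 2 * Real.cos (θ s) ^ 2 :=
      Finset.sum_nonneg fun s _ => by positivity
    have hle : ∑ s : Fin d, 4 * a s ^ 2 * Real.cos (θ s) ^ 2 ≤ ∑ s : Fin d, 4 * a s ^ 2 := by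
      apply Finset.sum_le_sum
      intro s _
      nlinarith [Real.cos_sq_le_one (θ s), sq_nonneg (a s)]
    have hlo : Real.log (x ^ 2) ≤ G θ := by
      apply Real.log_le_log (by positivity)
      linarith
    have hhi : G θ ≤ Real.log (x ^ 2 + ∑ s : Fin d, 4 * a s ^ 2) := by
      apply Real.log_le_log (hargpos θ)
      linarith
    rw [abs_le]
    constructor
    · have := neg_abs_le (Real.log (x ^ 2)); linarith [abs_nonneg (Real.log (x ^ 2 + ∑ s : Fin d, 4 * a s ^ 2))]
    · have := le_abs_self (Real.log (x ^ 2 + ∑ s : Fin d, 4 * a s ^ 2)); linarith [abs_nonneg (Real.log (x ^ 2))]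
  -- measurability of step functions
  have hmeasF : ∀ m : Fin d → ℕ,
      Measurable (fun θ : Fin d → ℝ => G (fun s => mdNode (m s) (θ s))) := by
    intro m
    apply hGcont.measurable.comp
    apply measurable_pi_lambda
    intro s
    have h1 : Measurable fun θ : Fin d → ℝ => 2 * ((m s : ℝ)) * θ s / Real.pi :=
      ((measurable_const.mul (measurable_pi_apply s)).div_const _)
    exact (measurable_from_top.comp h1.ceil).mul_const _
  -- pointwise convergence
  have hptwise : ∀ θ : Fin d → ℝ,
      Tendsto (fun m : Fin d → ℕ => G (fun s => mdNode (m s) (θ s))) atTop (𝓝 (G θ)) := by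
    intro θ
    apply (hGcont.tendsto θ).comp
    rw [tendsto_pi_nhds]
    intro s
    apply (mdNode_tendsto (θ s)).comp
    rw [tendsto_atTop]
    intro b
    filter_upwards [Filter.eventually_ge_atTop (fun _ : Fin d => b)] with m hm
    exact hm s
  -- dominated convergence
  have hSfin : volume S < ⊤ :=
    (isCompact_univ_pi fun _ => isCompact_Icc).measure_lt_top
  have key : Tendsto (fun m : Fin d → ℕ => ∫ θ in S, G (fun s => mdNode (m s) (θ s)))
      atTop (𝓝 (∫ θ in S, G θ)) := by
    apply MeasureTheory.tendsto_integral_filter_of_dominated_convergence (bound := fun _ => C)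
    · exact Filter.Eventually.of_forall fun m => ((hmeasF m).aestronglyMeasurable)
    · exact Filter.Eventually.of_forall fun m => ae_of_all _ fun θ => by
        simpa [Real.norm_eq_abs] using hbG (fun s => mdNode (m s) (θ s))
    · exact (integrableOn_const hSfin.ne)
    · exact ae_of_all _ fun θ => hptwise θ
  have main := key.const_mul ((2:ℝ) ^ (d - 1) / Real.pi ^ d)
  apply main.congr'
  filter_upwards [Filter.eventually_ge_atTop (fun _ : Fin d => 1)] with m hm
  have hm' : ∀ s, 1 ≤ m s := fun s => hm s
  have hmpos : ∀ s, (0 : ℝ) < (m s : ℝ) := fun s => by exact_mod_cast hm' s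
  rw [hG] at *
  rw [show (fun θ : Fin d → ℝ => Real.log (x ^ 2 + ∑ s : Fin d,
      4 * a s ^ 2 * Real.cos (mdNode (m s) (θ s)) ^ 2)) = fun θ => Real.log (x ^ 2 + ∑ s : Fin d,
      4 * a s ^ 2 * Real.cos (mdNode (m s) (θ s)) ^ 2) from rfl]
  rw [integral_step a x m hm', ← mul_assoc]
  congr 1
  -- constants
  have hprodm : (0:ℝ) < ∏ s : Fin d, (m s : ℝ) := Finset.prod_pos fun s _ => hmpos s
  have hprod : (∏ s : Fin d, Real.pi / (2 * (m s : ℝ)))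
      = Real.pi ^ d / (2 ^ d * ∏ s : Fin d, (m s : ℝ)) := by
    rw [Finset.prod_div_distrib, Finset.prod_const, Finset.prod_mul_distrib, Finset.prod_const]
    simp [Finset.card_univ]
  rw [hprod]
  obtain ⟨e, rfl⟩ : ∃ e, d = e + 1 := ⟨d - 1, (Nat.succ_pred_eq_of_pos hd).symm⟩
  simp only [Nat.add_sub_cancel]
  have hpine : Real.pi ≠ 0 := hpi.ne'
  have h2 : ((2:ℝ)) ^ (e + 1) = 2 * 2 ^ e := by ring
  field_simp
  ring
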